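/- For r ≥ 1, define the r-th order transport operator by T̄_{h,(r)} φ⁰_{h,k}(x) := χ_{Σ̃_{h,k}}(x) · φ⁰_{h,k}(B̄_{(r),k}(x)), extended to f⁰_h by linearity. Then there exists a constant C depending only on c_w, L_φ, ρ⁰, d and r (independent of h, f⁰ and the flow) such that ‖(T̄_{h,(r)} − T̄_ex) f⁰_h‖_{L^∞(ℝ^d)} ≤ C · h^r · c̃_{F,(r)} · (1 + h c̃_{F,(1)})^d · ‖f⁰‖_{L^∞}, where c̃_{F,(m)} := (ρ̃ |F̄|₁)^{m+1} |B̄|_{m+1} for m ≥ 1 and ρ̃ := ρ⁰ (1 + (hρ⁰/2) |F̄|₁² |B̄|₂). -/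

import Mathlib

open scoped NNReal
open Set

/-- Grid node `x⁰_k := h k`. -/
noncomputable def node (d : ℕ) (h : ℝ) (k : Fin d → ℤ) : Fin d → ℝ :=
  fun i => h * (k i : ℝ)

/-- Particle shape function `φ⁰_{h,k}(x) := h^{-d} φ(h⁻¹ x - k)`. -/
noncomputable def part (d : ℕ) (h : ℝ) (φ : (Fin d → ℝ) → ℝ)
    (k : Fin d → ℤ) (x : Fin d → ℝ) : ℝ :=
  (h ^ d)⁻¹ * φ (fun i => x i / h - (k i : ℝ))

/-- Partial derivative `∂_l g`. -/
noncomputable def pd (d : ℕ) (l : Fin d) (g : (Fin d → ℝ) → ℝ) : (Fin d → ℝ) → ℝ :=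
  fun x => fderiv ℝ g x (Pi.single l 1)

/-- Iterated partial derivative `∂_{l₁} ⋯ ∂_{l_m} g`. -/
noncomputable def iterPD (d : ℕ) : List (Fin d) → ((Fin d → ℝ) → ℝ) → ((Fin d → ℝ) → ℝ)
  | [], g => g
  | l :: ls, g => pd d l (iterPD d ls g)

/-- Linearized backward flow `B̄_{(1),k}(x) := x⁰_k + J_k⁻¹ (x − F̄(x⁰_k))`. -/
noncomputable def B1 (d : ℕ) (h : ℝ) (F : (Fin d → ℝ) ≃ (Fin d → ℝ))
    (k : Fin d → ℤ) (x : Fin d → ℝ) : Fin d → ℝ :=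
  node d h k +
    fderiv ℝ (F.symm : (Fin d → ℝ) → (Fin d → ℝ)) (F (node d h k)) (x - F (node d h k))

/-- Linearized forward flow `F̄_{(1),k}(x̂) := F̄(x⁰_k) + J_k (x̂ − x⁰_k)`. -/
noncomputable def F1 (d : ℕ) (h : ℝ) (F : (Fin d → ℝ) ≃ (Fin d → ℝ))
    (k : Fin d → ℤ) (y : Fin d → ℝ) : Fin d → ℝ :=
  F (node d h k) +
    fderiv ℝ (F : (Fin d → ℝ) → (Fin d → ℝ)) (node d h k) (y - node d h k)

/-- Enlarged radius `ρ̃_{h,k} := ρ⁰ + h⁻¹ sup_{x ∈ F̄(Σ⁰_{h,k})} ‖B̄_{(1),k}(x) − B̄(x)‖_∞`. -/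
noncomputable def ρt (d : ℕ) (h ρ0 : ℝ) (φ : (Fin d → ℝ) → ℝ)
    (F : (Fin d → ℝ) ≃ (Fin d → ℝ)) (k : Fin d → ℤ) : ℝ :=
  ρ0 + h⁻¹ * ⨆ x : (F '' Function.support (part d h φ k)),
      ‖B1 d h F k x.1 - F.symm x.1‖

/-- Enlarged a priori support `Σ̃_{h,k} := F̄_{(1),k}(B_∞(x⁰_k, h ρ̃_{h,k}))`. -/
noncomputable def St (d : ℕ) (h ρ0 : ℝ) (φ : (Fin d → ℝ) → ℝ)
    (F : (Fin d → ℝ) ≃ (Fin d → ℝ)) (k : Fin d → ℤ) : Set (Fin d → ℝ) :=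
  F1 d h F k '' Metric.closedBall (node d h k) (h * ρt d h ρ0 φ F k)

/-- Degree-`r` Taylor polynomial of `B` at `a`. -/
noncomputable def taylorP (d r : ℕ) (B : (Fin d → ℝ) → (Fin d → ℝ))
    (a x : Fin d → ℝ) : Fin d → ℝ :=
  ∑ j ∈ Finset.range (r + 1),
    (j.factorial : ℝ)⁻¹ • iteratedFDeriv ℝ j B a (fun _ => x - a)

lemma iterPD_eq_iteratedFDeriv (d : ℕ) : ∀ (m : ℕ) (f : (Fin d → ℝ) → ℝ),
    ContDiff ℝ (m : ℕ) f → ∀ (ls : Fin m → Fin d) (x : Fin d → ℝ),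
    iterPD d (List.ofFn ls) f x
      = iteratedFDeriv ℝ m f x (fun j => Pi.single (ls j) 1) := by
  intro m
  induction m with
  | zero =>
    intro f _ ls x
    simp [List.ofFn_zero, iterPD, iteratedFDeriv_zero_apply]
  | succ m IH =>
    intro f hf ls x
    have hfm : ContDiff ℝ (m : ℕ) f := hf.of_le (by exact_mod_cast Nat.le_succ m)
    have hIH : ∀ y, iterPD d (List.ofFn (Fin.tail ls)) f y
        = iteratedFDeriv ℝ m f y (fun j => Pi.single (Fin.tail ls j) 1) :=
      fun y => IH f hfm (Fin.tail ls) y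
    have hdiff : Differentiable ℝ (iteratedFDeriv ℝ m f) :=
      hf.differentiable_iteratedFDeriv (by exact_mod_cast Nat.lt_succ_self m)
    have hofn : List.ofFn ls = ls 0 :: List.ofFn (Fin.tail ls) := by
      rw [List.ofFn_succ]; rfl
    rw [hofn]
    show pd d (ls 0) (iterPD d (List.ofFn (Fin.tail ls)) f) x = _
    have hfun : iterPD d (List.ofFn (Fin.tail ls)) f
        = fun y => (ContinuousMultilinearMap.apply ℝ (fun _ : Fin m => (Fin d → ℝ)) ℝ
            (fun j => Pi.single (Fin.tail ls j) 1)) (iteratedFDeriv ℝ m f y) := by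
      funext y; rw [hIH y]; rfl
    rw [pd, hfun]
    have hcomp : HasFDerivAt
        (fun y => (ContinuousMultilinearMap.apply ℝ (fun _ : Fin m => (Fin d → ℝ)) ℝ
            (fun j => Pi.single (Fin.tail ls j) 1)) (iteratedFDeriv ℝ m f y))
        ((ContinuousMultilinearMap.apply ℝ (fun _ : Fin m => (Fin d → ℝ)) ℝ
            (fun j => Pi.single (Fin.tail ls j) 1)).comp
          (fderiv ℝ (iteratedFDeriv ℝ m f) x)) x :=
      (ContinuousMultilinearMap.apply ℝ (fun _ : Fin m => (Fin d → ℝ)) ℝ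
            (fun j => Pi.single (Fin.tail ls j) 1)).hasFDerivAt.comp x
        (hdiff x).hasFDerivAt
    rw [hcomp.fderiv]
    rw [iteratedFDeriv_succ_apply_left]
    rfl

lemma abs_iteratedFDeriv_le (d m : ℕ) (f : (Fin d → ℝ) → ℝ) (c : ℝ)
    (hc : ∀ x, ∑ ls : Fin m → Fin d, |iterPD d (List.ofFn ls) f x| ≤ c)
    (hf : ContDiff ℝ (m:ℕ) f) (x v : Fin d → ℝ) :
    |iteratedFDeriv ℝ m f x (fun _ => v)| ≤ c * ‖v‖ ^ m := by
  classical
  set D := iteratedFDeriv ℝ m f x with hD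
  set e : Fin d → (Fin d → ℝ) := fun l => Pi.single l 1 with he
  have hv : ∀ j : Fin m, v = ∑ l : Fin d, (v l) • e l := by
    intro j
    funext i
    simp only [he, Finset.sum_apply, Pi.smul_apply, smul_eq_mul, Pi.single_apply,
      mul_ite, mul_one, mul_zero]
    rw [Finset.sum_ite_eq Finset.univ i v]
    simp
  have h1 : D (fun _ => v) = ∑ ls ∈ Fintype.piFinset (fun _ : Fin m => Finset.univ),
      (∏ j, v (ls j)) • D (fun j => e (ls j)) := by
    calc D (fun _ => v) = D (fun j => ∑ l : Fin d, (v l) • e l) := by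
          congr 1; funext j; exact hv j
    _ = ∑ ls ∈ Fintype.piFinset (fun _ : Fin m => Finset.univ),
          D (fun j => (v (ls j)) • e (ls j)) := by
          exact D.map_sum_finset (fun j l => (v l) • e l) (fun _ => Finset.univ)
    _ = _ := by
          refine Finset.sum_congr rfl (fun ls _ => ?_)
          exact D.map_smul_univ (fun j => v (ls j)) (fun j => e (ls j))
  rw [h1]
  have h2 : ∀ ls : Fin m → Fin d,
      |(∏ j, v (ls j)) • D (fun j => e (ls j))|
        ≤ ‖v‖ ^ m * |iterPD d (List.ofFn ls) f x| := by
    intro ls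
    rw [smul_eq_mul, abs_mul, iterPD_eq_iteratedFDeriv d m f hf ls x, ← hD]
    gcongr
    calc |∏ j, v (ls j)| = ∏ j, |v (ls j)| := by rw [Finset.abs_prod]
    _ ≤ ∏ _j : Fin m, ‖v‖ := by
        refine Finset.prod_le_prod (fun _ _ => abs_nonneg _) (fun j _ => ?_)
        exact (Real.norm_eq_abs _) ▸ norm_le_pi_norm v (ls j)
    _ = ‖v‖ ^ m := by simp
  calc |∑ ls ∈ Fintype.piFinset (fun _ : Fin m => Finset.univ),
      (∏ j, v (ls j)) • D (fun j => e (ls j))|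
      ≤ ∑ ls ∈ Fintype.piFinset (fun _ : Fin m => Finset.univ),
        |(∏ j, v (ls j)) • D (fun j => e (ls j))| := Finset.abs_sum_le_sum_abs _ _
    _ ≤ ∑ ls ∈ Fintype.piFinset (fun _ : Fin m => Finset.univ),
        ‖v‖ ^ m * |iterPD d (List.ofFn ls) f x| := Finset.sum_le_sum (fun ls _ => h2 ls)
    _ = ‖v‖ ^ m * ∑ ls : Fin m → Fin d, |iterPD d (List.ofFn ls) f x| := by
        rw [← Finset.mul_sum, Fintype.piFinset_univ]
    _ ≤ ‖v‖ ^ m * c :=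
        mul_le_mul_of_nonneg_left (hc x) (pow_nonneg (norm_nonneg v) m)
    _ = c * ‖v‖ ^ m := mul_comm _ _

lemma rem_bound {E : Type*} [NormedAddCommGroup E] [NormedSpace ℝ E] :
    ∀ (n : ℕ) (g : ℝ → E), ContDiff ℝ (n+1 : ℕ) g → ∀ M : ℝ,
    (∀ t ∈ Icc (0:ℝ) 1, ‖iteratedDeriv (n+1) g t‖ ≤ M) →
    ∀ t ∈ Icc (0:ℝ) 1,
      ‖g t - ∑ j ∈ Finset.range (n+1), (t ^ j / (j.factorial : ℝ)) • iteratedDeriv j g 0‖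
        ≤ M * t := by
  intro n
  induction n with
  | zero =>
    intro g hg M hM t ht
    have h0 : ∑ j ∈ Finset.range 1, (t ^ j / (j.factorial : ℝ)) • iteratedDeriv j g 0
        = g 0 := by simp [iteratedDeriv_zero]
    rw [h0]
    have hdiff : Differentiable ℝ g := hg.differentiable (by simp)
    have := norm_image_sub_le_of_norm_deriv_le_segment'
      (f := g) (f' := deriv g) (a := 0) (b := 1)
      (fun s hs => (hdiff s).hasDerivAt.hasDerivWithinAt)
      (fun s hs => by
        have := hM s (Ico_subset_Icc_self hs)
        rwa [iteratedDeriv_one] at this) t ht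
    simpa using this
  | succ n IH =>
    intro g hg M hM t ht
    have hM0 : 0 ≤ M := le_trans (norm_nonneg _) (hM 0 (by norm_num))
    have hdg : ContDiff ℝ (n+1 : ℕ) (deriv g) := by
      have : ContDiff ℝ ((n+1 : ℕ) + 1) g := by exact_mod_cast hg
      exact (contDiff_succ_iff_deriv.mp this).2.2
    have hdiff : Differentiable ℝ g := by
      have : ContDiff ℝ ((n+1 : ℕ) + 1) g := by exact_mod_cast hg
      exact (contDiff_succ_iff_deriv.mp this).1
    set c : ℕ → E := fun j => iteratedDeriv j g 0 with hc
    set R : ℝ → E := fun s =>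
      g s - ∑ j ∈ Finset.range (n+2), (s ^ j / (j.factorial : ℝ)) • c j with hR
    set R' : ℝ → E := fun s =>
      deriv g s - ∑ j ∈ Finset.range (n+1), (s ^ j / (j.factorial : ℝ)) •
        iteratedDeriv j (deriv g) 0 with hR'
    have hRderiv : ∀ s ∈ Icc (0:ℝ) 1, HasDerivWithinAt R (R' s) (Icc 0 1) s := by
      intro s hs
      have h1 : HasDerivAt g (deriv g s) s := (hdiff s).hasDerivAt
      have h2 : HasDerivAt (fun u => ∑ j ∈ Finset.range (n+2),
          (u ^ j / (j.factorial : ℝ)) • c j)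
          (∑ j ∈ Finset.range (n+2), ((j * s ^ (j-1)) / (j.factorial : ℝ)) • c j) s := by
        refine HasDerivAt.fun_sum (fun j _ => ?_)
        have hp : HasDerivAt (fun u : ℝ => u ^ j / (j.factorial : ℝ))
            ((j * s ^ (j-1)) / (j.factorial : ℝ)) s := (hasDerivAt_pow j s).div_const _
        exact hp.smul_const (c j)
      have h3 : ∑ j ∈ Finset.range (n+2), ((j * s ^ (j-1)) / (j.factorial : ℝ)) • c j
          = ∑ j ∈ Finset.range (n+1), (s ^ j / (j.factorial : ℝ)) •
              iteratedDeriv j (deriv g) 0 := by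
        rw [Finset.sum_range_succ' (fun j => ((j * s ^ (j-1)) / (j.factorial : ℝ)) • c j)]
        simp only [Nat.cast_zero, zero_mul, zero_div, zero_smul, add_zero]
        refine Finset.sum_congr rfl (fun j _ => ?_)
        rw [← iteratedDeriv_succ']
        congr 1
        rw [Nat.factorial_succ]
        push_cast
        have hj : (0:ℝ) < (j.factorial : ℝ) := by exact_mod_cast j.factorial_pos
        field_simp
      rw [h3] at h2
      exact ((h1.sub h2).hasDerivWithinAt)
    have hbound : ∀ s ∈ Ico (0:ℝ) 1, ‖R' s‖ ≤ M := by
      intro s hs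
      have hIH := IH (deriv g) hdg M (fun u hu => by
        rw [← iteratedDeriv_succ']
        exact hM u hu) s (Ico_subset_Icc_self hs)
      calc ‖R' s‖ ≤ M * s := hIH
      _ ≤ M * 1 := by nlinarith [hs.2, hs.1]
      _ = M := mul_one M
    have hmain := norm_image_sub_le_of_norm_deriv_le_segment' hRderiv hbound t ht
    have hR0 : R 0 = 0 := by
      simp only [hR]
      rw [Finset.sum_eq_single 0]
      · simp [hc, iteratedDeriv_zero]
      · intro j _ hj
        rw [zero_pow hj, zero_div, zero_smul]
      · intro habs
        exact absurd (Finset.mem_range.mpr (Nat.succ_pos _)) habs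
    rw [hR0, sub_zero, sub_zero] at hmain
    exact hmain

lemma iteratedDeriv_line {d : ℕ} (N : ℕ) (f : (Fin d → ℝ) → (Fin d → ℝ))
    (hf : ContDiff ℝ (N : ℕ) f) :
    ∀ (j : ℕ), j ≤ N → ∀ (a v : Fin d → ℝ) (t : ℝ),
    iteratedDeriv j (fun s => f (a + s • v)) t
      = iteratedFDeriv ℝ j f (a + t • v) (fun _ => v) := by
  intro j
  induction j with
  | zero => intro _ a v t; simp [iteratedDeriv_zero, iteratedFDeriv_zero_apply]
  | succ j IH =>
    intro hj a v t
    rw [iteratedDeriv_succ]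
    have hIH : iteratedDeriv j (fun s => f (a + s • v))
        = fun s : ℝ => (ContinuousMultilinearMap.apply ℝ (fun _ : Fin j => (Fin d → ℝ))
            (Fin d → ℝ) (fun _ => v)) (iteratedFDeriv ℝ j f (a + s • v)) := by
      funext s
      rw [IH (le_trans (Nat.le_succ j) hj) a v s]
      rfl
    rw [hIH]
    have hdiff : Differentiable ℝ (iteratedFDeriv ℝ j f) :=
      hf.differentiable_iteratedFDeriv (by exact_mod_cast Nat.lt_of_lt_of_le (Nat.lt_succ_self j) hj)
    have hL : HasDerivAt (fun s : ℝ => a + s • v) v t := by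
      have h1 : HasDerivAt (fun s : ℝ => s • v) ((1:ℝ) • v) t :=
        (hasDerivAt_id t).smul_const v
      simpa using h1.const_add a
    have hΦ : HasFDerivAt
        (fun y => (ContinuousMultilinearMap.apply ℝ (fun _ : Fin j => (Fin d → ℝ))
            (Fin d → ℝ) (fun _ => v)) (iteratedFDeriv ℝ j f y))
        ((ContinuousMultilinearMap.apply ℝ (fun _ : Fin j => (Fin d → ℝ))
            (Fin d → ℝ) (fun _ => v)).comp
          (fderiv ℝ (iteratedFDeriv ℝ j f) (a + t • v))) (a + t • v) :=
      (ContinuousMultilinearMap.apply ℝ (fun _ : Fin j => (Fin d → ℝ))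
            (Fin d → ℝ) (fun _ => v)).hasFDerivAt.comp _
        (hdiff _).hasFDerivAt
    have hcomp := hΦ.comp_hasDerivAt t hL
    have hcomp' : HasDerivAt (fun s : ℝ =>
        (ContinuousMultilinearMap.apply ℝ (fun _ : Fin j => (Fin d → ℝ))
            (Fin d → ℝ) (fun _ => v)) (iteratedFDeriv ℝ j f (a + s • v)))
        (((ContinuousMultilinearMap.apply ℝ (fun _ : Fin j => (Fin d → ℝ))
            (Fin d → ℝ) (fun _ => v)).comp
          (fderiv ℝ (iteratedFDeriv ℝ j f) (a + t • v))) v) t := hcomp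
    rw [hcomp'.deriv]
    rw [iteratedFDeriv_succ_apply_left]
    rfl

lemma taylor_rem_bound {d : ℕ} (hd : 1 ≤ d) (m : ℕ) (f : (Fin d → ℝ) → (Fin d → ℝ))
    (hf : ContDiff ℝ (m+1 : ℕ) f) (c : ℝ)
    (hc : ∀ (i : Fin d) (x : Fin d → ℝ),
      ∑ ls : Fin (m+1) → Fin d, |iterPD d (List.ofFn ls) (fun y => f y i) x| ≤ c)
    (a v : Fin d → ℝ) :
    ‖f (a + v) - ∑ j ∈ Finset.range (m+1),
        ((j.factorial : ℝ))⁻¹ • iteratedFDeriv ℝ j f a (fun _ => v)‖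
      ≤ c * ‖v‖ ^ (m+1) := by
  have : Fin d := ⟨0, hd⟩
  have hc0 : 0 ≤ c :=
    le_trans (Finset.sum_nonneg (fun _ _ => abs_nonneg _)) (hc this 0)
  set g : ℝ → (Fin d → ℝ) := fun t => f (a + t • v) with hg
  have hgc : ContDiff ℝ (m+1 : ℕ) g := by
    refine hf.comp ?_
    exact contDiff_const.add (contDiff_id.smul contDiff_const)
  set M : ℝ := c * ‖v‖ ^ (m+1) with hM
  have hcomp : ∀ (i : Fin d) (y : Fin d → ℝ),
      (iteratedFDeriv ℝ (m+1) f y (fun _ => v)) i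
        = iteratedFDeriv ℝ (m+1) (fun z => f z i) y (fun _ => v) := by
    intro i y
    have := (ContinuousLinearMap.proj (R := ℝ) (φ := fun _ : Fin d => ℝ)
        i).iteratedFDeriv_comp_left (hf.contDiffAt (x := y)) (le_refl ((m+1 : ℕ) : WithTop ℕ∞))
    have h2 := congrArg (fun (T : ContinuousMultilinearMap ℝ (fun _ : Fin (m+1) => (Fin d → ℝ)) ℝ)
        => T (fun _ => v)) this
    simpa [Function.comp_def] using h2.symm
  have hbd : ∀ t ∈ Icc (0:ℝ) 1, ‖iteratedDeriv (m+1) g t‖ ≤ M := by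
    intro t _
    rw [iteratedDeriv_line (m+1) f hf (m+1) le_rfl a v t]
    rw [pi_norm_le_iff_of_nonneg (by positivity)]
    intro i
    rw [Real.norm_eq_abs, hcomp i (a + t • v)]
    refine abs_iteratedFDeriv_le d (m+1) (fun z => f z i) c (hc i) ?_ _ v
    exact (ContinuousLinearMap.proj (R := ℝ) (φ := fun _ : Fin d => ℝ) i).contDiff.comp hf
  have hrem := rem_bound m g hgc M hbd 1 (by norm_num)
  have h1 : g 1 = f (a + v) := by rw [hg]; simp
  have h2 : ∀ j, j ≤ m + 1 → iteratedDeriv j g 0 = iteratedFDeriv ℝ j f a (fun _ => v) := by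
    intro j hj
    have := iteratedDeriv_line (m+1) f hf j hj a v 0
    simpa using this
  have h3 : ∑ j ∈ Finset.range (m+1), ((1:ℝ) ^ j / (j.factorial : ℝ)) • iteratedDeriv j g 0
      = ∑ j ∈ Finset.range (m+1), ((j.factorial : ℝ))⁻¹ • iteratedFDeriv ℝ j f a (fun _ => v) := by
    refine Finset.sum_congr rfl (fun j hj => ?_)
    rw [h2 j (le_of_lt (Finset.mem_range.mp hj)), one_pow]
    congr 1
    rw [one_div]
  rw [h1, h3] at hrem
  simpa using hrem

lemma fderiv_apply_bound {d : ℕ} (hd : 1 ≤ d) (f : (Fin d → ℝ) → (Fin d → ℝ))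
    (hf : ContDiff ℝ 1 f) (c : ℝ)
    (hc : ∀ (i : Fin d) (x : Fin d → ℝ), ∑ l : Fin d, |pd d l (fun y => f y i) x| ≤ c)
    (x v : Fin d → ℝ) : ‖fderiv ℝ f x v‖ ≤ c * ‖v‖ := by
  have hi0 : Fin d := ⟨0, hd⟩
  have hc0 : 0 ≤ c := le_trans (Finset.sum_nonneg (fun _ _ => abs_nonneg _)) (hc hi0 0)
  rw [pi_norm_le_iff_of_nonneg (by positivity)]
  intro i
  have hdiff : DifferentiableAt ℝ f x := (hf.differentiable one_ne_zero) x
  have hproj : (fderiv ℝ f x v) i = fderiv ℝ (fun y => f y i) x v := by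
    have := ((ContinuousLinearMap.proj (R := ℝ) (φ := fun _ : Fin d => ℝ)
        i).hasFDerivAt.comp x hdiff.hasFDerivAt).fderiv
    rw [show (fun y => f y i) = (ContinuousLinearMap.proj (R := ℝ) (φ := fun _ : Fin d => ℝ) i)
      ∘ f from rfl, this]
    rfl
  rw [Real.norm_eq_abs, hproj]
  have hfi : ContDiff ℝ (1:ℕ) (fun y => f y i) := by
    have : ContDiff ℝ 1 (fun y => f y i) :=
      (ContinuousLinearMap.proj (R := ℝ) (φ := fun _ : Fin d => ℝ) i).contDiff.comp hf
    exact_mod_cast this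
  have hc' : ∀ z, ∑ ls : Fin 1 → Fin d, |iterPD d (List.ofFn ls) (fun y => f y i) z| ≤ c := by
    intro z
    have hsum : ∑ ls : Fin 1 → Fin d, |iterPD d (List.ofFn ls) (fun y => f y i) z|
        = ∑ l : Fin d, |pd d l (fun y => f y i) z| := by
      refine Fintype.sum_equiv (Equiv.funUnique (Fin 1) (Fin d)) _ _ (fun ls => ?_)
      have : List.ofFn ls = [ls 0] := by
        rw [List.ofFn_succ, List.ofFn_zero]
      rw [this]
      rfl
    rw [hsum]
    exact hc i z
  have hb := abs_iteratedFDeriv_le d 1 (fun y => f y i) c hc' hfi x v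
  rw [iteratedFDeriv_one_apply] at hb
  simpa using hb

lemma lip_of_pd_bound {d : ℕ} (hd : 1 ≤ d) (f : (Fin d → ℝ) → (Fin d → ℝ))
    (hf : ContDiff ℝ 1 f) (c : ℝ)
    (hc : ∀ (i : Fin d) (x : Fin d → ℝ), ∑ l : Fin d, |pd d l (fun y => f y i) x| ≤ c)
    (x y : Fin d → ℝ) : ‖f y - f x‖ ≤ c * ‖y - x‖ := by
  refine Convex.norm_image_sub_le_of_norm_fderiv_le (s := Set.univ)
    (fun z _ => (hf.differentiable one_ne_zero) z) (fun z _ => ?_) convex_univ trivial trivial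
  exact ContinuousLinearMap.opNorm_le_bound _
    (le_trans (Finset.sum_nonneg (fun _ _ => abs_nonneg _)) (hc ⟨0, hd⟩ 0))
    (fun v => fderiv_apply_bound hd f hf c hc z v)


set_option maxHeartbeats 2000000 in
/-- the `r`-th order transport operator
`T̄_{h,(r)} φ⁰_{h,k}(x) := χ_{Σ̃_{h,k}}(x) φ⁰_{h,k}(B̄_{(r),k}(x))` satisfies
`‖(T̄_{h,(r)} − T̄_ex) f⁰_h‖_∞ ≤ C h^r c̃_{F,(r)} (1 + h c̃_{F,(1)})^d ‖f⁰‖_∞`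
with `c̃_{F,(m)} := (ρ̃ |F̄|₁)^{m+1} |B̄|_{m+1}`, `ρ̃ := ρ⁰(1 + (hρ⁰/2)|F̄|₁²|B̄|₂)`,
and `C = C(c_w, L_φ, ρ⁰, d, r)`. -/
theorem r_th_order_transport_error
    (d r : ℕ) (hd : 1 ≤ d) (hr : 1 ≤ r)
    (cw : ℝ) (hcw : 0 < cw) (Lφ : ℝ≥0) (ρ0 : ℝ) (hρ0 : 0 < ρ0) :
    ∃ C : ℝ, 0 < C ∧
      ∀ (h : ℝ), 0 < h →
      ∀ (φ : (Fin d → ℝ) → ℝ), LipschitzWith Lφ φ → (∀ x, φ x ≠ 0 → ‖x‖ ≤ ρ0) →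
      ∀ (f0 : (Fin d → ℝ) → ℝ), BddAbove (Set.range fun x => |f0 x|) →
      ∀ (w : (Fin d → ℤ) → ℝ), (∀ k, |w k| ≤ cw * h ^ d * ⨆ y, |f0 y|) →
      ∀ (F : (Fin d → ℝ) ≃ (Fin d → ℝ)),
        ContDiff ℝ 1 (F : (Fin d → ℝ) → (Fin d → ℝ)) →
        ContDiff ℝ (r + 1 : ℕ) (F.symm : (Fin d → ℝ) → (Fin d → ℝ)) →
      -- `cF1` bounds `|F̄|₁`
      ∀ (cF1 : ℝ), (∀ (i : Fin d) (x : Fin d → ℝ),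
          ∑ l : Fin d, |pd d l (fun y => F y i) x| ≤ cF1) →
      -- `cB2` bounds `|B̄|₂`
      ∀ (cB2 : ℝ), (∀ (i : Fin d) (x : Fin d → ℝ),
          ∑ l1 : Fin d, ∑ l2 : Fin d,
            |pd d l1 (pd d l2 (fun y => F.symm y i)) x| ≤ cB2) →
      -- `cBr` bounds `|B̄|_{r+1}`
      ∀ (cBr : ℝ), (∀ (i : Fin d) (x : Fin d → ℝ),
          ∑ ls : Fin (r + 1) → Fin d,
            |iterPD d (List.ofFn ls) (fun y => F.symm y i) x| ≤ cBr) →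
      ∀ x : Fin d → ℝ,
        |(∑' k : Fin d → ℤ, w k *
              (St d h ρ0 φ F k).indicator
                (fun y => part d h φ k (taylorP d r (F.symm) (F (node d h k)) y)) x)
            - ∑' k : Fin d → ℤ, w k * part d h φ k (F.symm x)|
          ≤ C * h ^ r
              * ((ρ0 * (1 + h * ρ0 / 2 * cF1 ^ 2 * cB2) * cF1) ^ (r + 1) * cBr)
              * (1 + h * ((ρ0 * (1 + h * ρ0 / 2 * cF1 ^ 2 * cB2) * cF1) ^ 2 * cB2)) ^ d
              * ⨆ y, |f0 y| := by
  classical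
  refine ⟨(4*ρ0+10)^d * cw * ((Lφ:ℝ)+1) * 2^(r+1), by positivity, ?_⟩
  intro h hh φ hφL hφsupp f0 hf0 w hw F hF hB cF1 hcF1 cB2 hcB2 cBr hcBr x
  have hh0 : h ≠ 0 := ne_of_gt hh
  set S := ⨆ y, |f0 y| with hS
  have hS0 : 0 ≤ S := le_trans (abs_nonneg (f0 0)) (le_ciSup hf0 0)
  have i0 : Fin d := ⟨0, hd⟩
  have hcF10 : 0 ≤ cF1 := le_trans (Finset.sum_nonneg fun _ _ => abs_nonneg _) (hcF1 i0 0)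
  have hcB20 : 0 ≤ cB2 :=
    le_trans (Finset.sum_nonneg fun _ _ => Finset.sum_nonneg fun _ _ => abs_nonneg _) (hcB2 i0 0)
  have hcBr0 : 0 ≤ cBr := le_trans (Finset.sum_nonneg fun _ _ => abs_nonneg _) (hcBr i0 0)
  -- abbreviations
  set ρe : ℝ := ρ0 * (1 + h * ρ0 / 2 * cF1 ^ 2 * cB2) with hρe
  set c1 : ℝ := (ρe * cF1) ^ 2 * cB2 with hc1
  set cr : ℝ := (ρe * cF1) ^ (r + 1) * cBr with hcr
  have hρe0 : 0 < ρe := by positivity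
  have hρeρ0 : ρ0 ≤ ρe := by
    rw [hρe]
    nlinarith [hρ0.le, hcF10, hcB20, hh.le, sq_nonneg cF1,
      mul_nonneg (mul_nonneg (mul_nonneg hh.le hρ0.le) (sq_nonneg cF1)) hcB20]
  have hc10 : 0 ≤ c1 := by positivity
  have hcr0 : 0 ≤ cr := by positivity
  set ρh : ℝ := 2 * ρe + 4 * (h * c1) with hρh
  have hρh0 : 0 < ρh := by positivity
  set z : Fin d → ℝ := F.symm x with hz
  -- Lipschitz bound on F
  have hFlip : ∀ a b : Fin d → ℝ, ‖F b - F a‖ ≤ cF1 * ‖b - a‖ :=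
    fun a b => lip_of_pd_bound hd (F : (Fin d → ℝ) → (Fin d → ℝ)) hF cF1 hcF1 a b
  -- derivative application bound
  have hDF : ∀ (a v : Fin d → ℝ), ‖fderiv ℝ (F : (Fin d → ℝ) → (Fin d → ℝ)) a v‖ ≤ cF1 * ‖v‖ :=
    fun a v => fderiv_apply_bound hd (F : (Fin d → ℝ) → (Fin d → ℝ)) hF cF1 hcF1 a v
  -- Taylor remainder of order r for F.symm
  have hBtay : ∀ a v : Fin d → ℝ,
      ‖F.symm (a + v) - ∑ j ∈ Finset.range (r+1),
        ((j.factorial : ℝ))⁻¹ • iteratedFDeriv ℝ j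
          (F.symm : (Fin d → ℝ) → (Fin d → ℝ)) a (fun _ => v)‖
        ≤ cBr * ‖v‖ ^ (r+1) :=
    fun a v => taylor_rem_bound hd r (F.symm : (Fin d → ℝ) → (Fin d → ℝ)) hB cBr hcBr a v
  -- first order Taylor remainder for F.symm
  have hB1err : ∀ a v : Fin d → ℝ,
      ‖F.symm (a + v) - F.symm a
          - fderiv ℝ (F.symm : (Fin d → ℝ) → (Fin d → ℝ)) a v‖ ≤ cB2 * ‖v‖ ^ 2 := by
    intro a v
    have hB2 : ContDiff ℝ (1+1 : ℕ) (F.symm : (Fin d → ℝ) → (Fin d → ℝ)) := by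
      refine hB.of_le ?_
      exact_mod_cast (by omega : (1+1:ℕ) ≤ r+1)
    have hcB2' : ∀ (i : Fin d) (y : Fin d → ℝ),
        ∑ ls : Fin 2 → Fin d, |iterPD d (List.ofFn ls) (fun u => F.symm u i) y| ≤ cB2 := by
      intro i y
      have hsum : ∑ ls : Fin 2 → Fin d, |iterPD d (List.ofFn ls) (fun u => F.symm u i) y|
          = ∑ l1 : Fin d, ∑ l2 : Fin d, |pd d l1 (pd d l2 (fun u => F.symm u i)) y| := by
        calc ∑ ls : Fin 2 → Fin d, |iterPD d (List.ofFn ls) (fun u => F.symm u i) y|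
            = ∑ p : Fin d × Fin d, |pd d p.1 (pd d p.2 (fun u => F.symm u i)) y| := by
              refine Fintype.sum_equiv (finTwoArrowEquiv (Fin d)) _ _ (fun ls => ?_)
              have h2 : List.ofFn ls = [ls 0, ls 1] := by
                rw [List.ofFn_succ, List.ofFn_succ, List.ofFn_zero]
                rfl
              rw [h2]
              rfl
          _ = ∑ l1 : Fin d, ∑ l2 : Fin d, |pd d l1 (pd d l2 (fun u => F.symm u i)) y| :=
              Fintype.sum_prod_type _
      rw [hsum]
      exact hcB2 i y
    have := taylor_rem_bound hd 1 (F.symm : (Fin d → ℝ) → (Fin d → ℝ)) hB2 cB2 hcB2' a v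
    have hs2 : ∑ j ∈ Finset.range (1+1), ((j.factorial : ℝ))⁻¹ •
        iteratedFDeriv ℝ j (F.symm : (Fin d → ℝ) → (Fin d → ℝ)) a (fun _ => v)
        = F.symm a + fderiv ℝ (F.symm : (Fin d → ℝ) → (Fin d → ℝ)) a v := by
      rw [Finset.sum_range_succ, Finset.sum_range_one]
      rw [iteratedFDeriv_zero_apply, iteratedFDeriv_one_apply]
      norm_num
    rw [hs2] at this
    rw [sub_sub]
    exact this
  -- inverse Jacobian identities
  have hFd : Differentiable ℝ (F : (Fin d → ℝ) → (Fin d → ℝ)) := hF.differentiable one_ne_zero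
  have hBd : Differentiable ℝ (F.symm : (Fin d → ℝ) → (Fin d → ℝ)) := by
    refine hB.differentiable ?_
    simp
  have hJid : ∀ p : Fin d → ℝ,
      (fderiv ℝ (F.symm : (Fin d → ℝ) → (Fin d → ℝ)) (F p)).comp
        (fderiv ℝ (F : (Fin d → ℝ) → (Fin d → ℝ)) p)
      = ContinuousLinearMap.id ℝ (Fin d → ℝ) := by
    intro p
    have hcomp : HasFDerivAt ((F.symm : (Fin d → ℝ) → (Fin d → ℝ)) ∘
        (F : (Fin d → ℝ) → (Fin d → ℝ)))
        ((fderiv ℝ (F.symm : (Fin d → ℝ) → (Fin d → ℝ)) (F p)).comp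
          (fderiv ℝ (F : (Fin d → ℝ) → (Fin d → ℝ)) p)) p :=
      (hBd (F p)).hasFDerivAt.comp p (hFd p).hasFDerivAt
    have hid : ((F.symm : (Fin d → ℝ) → (Fin d → ℝ)) ∘ (F : (Fin d → ℝ) → (Fin d → ℝ)))
        = id := by funext u; simp
    rw [hid] at hcomp
    exact hcomp.unique (hasFDerivAt_id p)
  have hJid' : ∀ p : Fin d → ℝ,
      (fderiv ℝ (F : (Fin d → ℝ) → (Fin d → ℝ)) p).comp
        (fderiv ℝ (F.symm : (Fin d → ℝ) → (Fin d → ℝ)) (F p))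
      = ContinuousLinearMap.id ℝ (Fin d → ℝ) := by
    intro p
    have hcomp : HasFDerivAt ((F : (Fin d → ℝ) → (Fin d → ℝ)) ∘
        (F.symm : (Fin d → ℝ) → (Fin d → ℝ)))
        ((fderiv ℝ (F : (Fin d → ℝ) → (Fin d → ℝ)) (F.symm (F p))).comp
          (fderiv ℝ (F.symm : (Fin d → ℝ) → (Fin d → ℝ)) (F p))) (F p) :=
      (hFd _).hasFDerivAt.comp (F p) (hBd (F p)).hasFDerivAt
    have hid : ((F : (Fin d → ℝ) → (Fin d → ℝ)) ∘ (F.symm : (Fin d → ℝ) → (Fin d → ℝ)))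
        = id := by funext u; simp
    have hp : F.symm (F p) = p := F.symm_apply_apply p
    rw [hid, hp] at hcomp
    exact hcomp.unique (hasFDerivAt_id (F p))
  have hF1B1 : ∀ (k : Fin d → ℤ) (x' : Fin d → ℝ), F1 d h F k (B1 d h F k x') = x' := by
    intro k x'
    show F (node d h k) + fderiv ℝ (F : (Fin d → ℝ) → (Fin d → ℝ)) (node d h k)
        ((node d h k + fderiv ℝ (F.symm : (Fin d → ℝ) → (Fin d → ℝ)) (F (node d h k))
          (x' - F (node d h k))) - node d h k) = x'
    rw [add_sub_cancel_left]
    have happ := congrArg (fun (T : (Fin d → ℝ) →L[ℝ] (Fin d → ℝ)) =>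
      T (x' - F (node d h k))) (hJid' (node d h k))
    simp only [ContinuousLinearMap.coe_comp', Function.comp_apply,
      ContinuousLinearMap.coe_id', id_eq] at happ
    rw [happ]
    abel
  have hB1F1 : ∀ (k : Fin d → ℤ) (y : Fin d → ℝ), B1 d h F k (F1 d h F k y) = y := by
    intro k y
    show node d h k + fderiv ℝ (F.symm : (Fin d → ℝ) → (Fin d → ℝ)) (F (node d h k))
        ((F (node d h k) + fderiv ℝ (F : (Fin d → ℝ) → (Fin d → ℝ)) (node d h k)
          (y - node d h k)) - F (node d h k)) = y
    rw [add_sub_cancel_left]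
    have happ := congrArg (fun (T : (Fin d → ℝ) →L[ℝ] (Fin d → ℝ)) =>
      T (y - node d h k)) (hJid (node d h k))
    simp only [ContinuousLinearMap.coe_comp', Function.comp_apply,
      ContinuousLinearMap.coe_id', id_eq] at happ
    rw [happ]
    abel
  -- support of part
  have hsupp : ∀ (k : Fin d → ℤ) (y : Fin d → ℝ), part d h φ k y ≠ 0 →
      ‖y - node d h k‖ ≤ h * ρ0 := by
    intro k y hy
    simp only [part] at hy
    have hφ : φ (fun i => y i / h - (k i : ℝ)) ≠ 0 := by
      intro h0
      exact hy (by rw [h0, mul_zero])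
    have h1 : ‖(fun i => y i / h - (k i : ℝ) : Fin d → ℝ)‖ ≤ ρ0 := hφsupp _ hφ
    have h2 : y - node d h k = h • (fun i => y i / h - (k i : ℝ) : Fin d → ℝ) := by
      funext i
      show y i - h * (k i : ℝ) = h * (y i / h - (k i : ℝ))
      field_simp
    rw [h2, norm_smul, Real.norm_eq_abs, abs_of_pos hh]
    exact mul_le_mul_of_nonneg_left h1 hh.le
  -- B1 vs exact backward flow
  have hB1B : ∀ (k : Fin d → ℤ) (x' : Fin d → ℝ),
      ‖B1 d h F k x' - F.symm x'‖ ≤ cB2 * ‖x' - F (node d h k)‖ ^ 2 := by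
    intro k x'
    have hq : F.symm (F (node d h k)) = node d h k := F.symm_apply_apply _
    have hqv : F (node d h k) + (x' - F (node d h k)) = x' := by abel
    have heq : B1 d h F k x' - F.symm x'
        = -(F.symm (F (node d h k) + (x' - F (node d h k)))
            - F.symm (F (node d h k))
            - fderiv ℝ (F.symm : (Fin d → ℝ) → (Fin d → ℝ)) (F (node d h k))
              (x' - F (node d h k))) := by
      rw [hqv, hq]
      show node d h k + _ - _ = _
      abel
    rw [heq, norm_neg]
    exact hB1err _ _
  -- radius bounds
  have hρtρ0 : ∀ k : Fin d → ℤ, ρ0 ≤ ρt d h ρ0 φ F k := by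
    intro k
    simp only [ρt]
    refine le_add_of_nonneg_right (mul_nonneg (inv_nonneg.mpr hh.le) ?_)
    exact Real.iSup_nonneg fun _ => norm_nonneg _
  have helemAll : ∀ (k : Fin d → ℤ) (u : ↥(F '' Function.support (part d h φ k))),
      ‖B1 d h F k u.1 - F.symm u.1‖ ≤ cB2 * (cF1 * (h * ρ0)) ^ 2 := by
    intro k u
    obtain ⟨x', hx'⟩ := u
    obtain ⟨y, hy, rfl⟩ := hx'
    have h1 : ‖y - node d h k‖ ≤ h * ρ0 := hsupp k y hy
    have h2 : ‖F y - F (node d h k)‖ ≤ cF1 * (h * ρ0) :=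
      le_trans (hFlip _ _) (mul_le_mul_of_nonneg_left h1 hcF10)
    calc ‖B1 d h F k (F y) - F.symm (F y)‖
        ≤ cB2 * ‖F y - F (node d h k)‖ ^ 2 := hB1B k (F y)
      _ ≤ cB2 * (cF1 * (h * ρ0)) ^ 2 :=
          mul_le_mul_of_nonneg_left (pow_le_pow_left₀ (norm_nonneg _) h2 2) hcB20
  have hρtle : ∀ k : Fin d → ℤ, ρt d h ρ0 φ F k ≤ 2 * ρe := by
    intro k
    have hsup : (⨆ u : ↥(F '' Function.support (part d h φ k)),
        ‖B1 d h F k u.1 - F.symm u.1‖) ≤ cB2 * (cF1 * (h * ρ0)) ^ 2 :=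
      Real.iSup_le (helemAll k) (by positivity)
    have hstep : h⁻¹ * (⨆ u : ↥(F '' Function.support (part d h φ k)),
        ‖B1 d h F k u.1 - F.symm u.1‖) ≤ h⁻¹ * (cB2 * (cF1 * (h * ρ0)) ^ 2) :=
      mul_le_mul_of_nonneg_left hsup (inv_nonneg.mpr hh.le)
    have heq2 : h⁻¹ * (cB2 * (cF1 * (h * ρ0)) ^ 2) = h * ρ0 ^ 2 * cF1 ^ 2 * cB2 := by
      field_simp
    simp only [ρt]
    rw [hρe]
    have := hstep
    rw [heq2] at this
    nlinarith [hρ0.le, mul_nonneg (mul_nonneg (mul_nonneg hh.le (sq_nonneg ρ0)) (sq_nonneg cF1)) hcB20]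
  -- exact support is contained in enlarged support
  have hFSt : ∀ (k : Fin d → ℤ), part d h φ k (F.symm x) ≠ 0 → x ∈ St d h ρ0 φ F k := by
    intro k hzk
    have hxmem : x ∈ F '' Function.support (part d h φ k) :=
      ⟨F.symm x, hzk, F.apply_symm_apply x⟩
    have hbdd : BddAbove (Set.range fun u : ↥(F '' Function.support (part d h φ k)) =>
        ‖B1 d h F k u.1 - F.symm u.1‖) := by
      refine ⟨cB2 * (cF1 * (h * ρ0)) ^ 2, ?_⟩
      rintro _ ⟨u, rfl⟩
      exact helemAll k u
    have h1 : ‖B1 d h F k x - F.symm x‖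
        ≤ ⨆ u : ↥(F '' Function.support (part d h φ k)), ‖B1 d h F k u.1 - F.symm u.1‖ :=
      le_ciSup hbdd (⟨x, hxmem⟩ : ↥(F '' Function.support (part d h φ k)))
    have h2 : ‖F.symm x - node d h k‖ ≤ h * ρ0 := hsupp k _ hzk
    have h3 : ‖B1 d h F k x - node d h k‖ ≤ h * ρt d h ρ0 φ F k := by
      have htri : ‖B1 d h F k x - node d h k‖
          ≤ ‖B1 d h F k x - F.symm x‖ + ‖F.symm x - node d h k‖ :=
        norm_sub_le_norm_sub_add_norm_sub _ _ _
      simp only [ρt]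
      have hcancel : h * (ρ0 + h⁻¹ * ⨆ u : ↥(F '' Function.support (part d h φ k)),
          ‖B1 d h F k u.1 - F.symm u.1‖)
          = h * ρ0 + (⨆ u : ↥(F '' Function.support (part d h φ k)),
            ‖B1 d h F k u.1 - F.symm u.1‖) := by
        rw [mul_add, ← mul_assoc, mul_inv_cancel₀ hh0, one_mul]
      rw [hcancel]
      linarith
    exact ⟨B1 d h F k x, Metric.mem_closedBall.mpr (by rw [dist_eq_norm]; exact h3), hF1B1 k x⟩
  -- membership in enlarged support: distance bounds
  have hSt1 : ∀ k : Fin d → ℤ, x ∈ St d h ρ0 φ F k →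
      ‖x - F (node d h k)‖ ≤ cF1 * (h * (2 * ρe)) := by
    intro k hx
    obtain ⟨y, hy, hxy⟩ := hx
    have h1 : ‖y - node d h k‖ ≤ h * ρt d h ρ0 φ F k := by
      rw [← dist_eq_norm]
      exact Metric.mem_closedBall.mp hy
    have h2 : x - F (node d h k)
        = fderiv ℝ (F : (Fin d → ℝ) → (Fin d → ℝ)) (node d h k) (y - node d h k) := by
      rw [← hxy]
      show F (node d h k) + fderiv ℝ (F : (Fin d → ℝ) → (Fin d → ℝ)) (node d h k)
        (y - node d h k) - F (node d h k) = _
      abel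
    rw [h2]
    refine le_trans (hDF _ _) ?_
    refine mul_le_mul_of_nonneg_left (le_trans h1 ?_) hcF10
    exact mul_le_mul_of_nonneg_left (hρtle k) hh.le
  have hSt2 : ∀ k : Fin d → ℤ, x ∈ St d h ρ0 φ F k → ‖z - node d h k‖ ≤ h * ρh := by
    intro k hx
    have h1 : ‖x - F (node d h k)‖ ≤ cF1 * (h * (2 * ρe)) := hSt1 k hx
    obtain ⟨y, hy, hxy⟩ := hx
    have hB1x : B1 d h F k x = y := by rw [← hxy]; exact hB1F1 k y
    have h2 : ‖B1 d h F k x - node d h k‖ ≤ h * (2 * ρe) := by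
      rw [hB1x, ← dist_eq_norm]
      refine le_trans (Metric.mem_closedBall.mp hy) ?_
      exact mul_le_mul_of_nonneg_left (hρtle k) hh.le
    have h3 : ‖z - B1 d h F k x‖ ≤ cB2 * (cF1 * (h * (2 * ρe))) ^ 2 := by
      rw [hz, norm_sub_rev]
      refine le_trans (hB1B k x) ?_
      exact mul_le_mul_of_nonneg_left (pow_le_pow_left₀ (norm_nonneg _) h1 2) hcB20
    have htri : ‖z - node d h k‖ ≤ ‖z - B1 d h F k x‖ + ‖B1 d h F k x - node d h k‖ :=
      norm_sub_le_norm_sub_add_norm_sub _ _ _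
    have hfin : cB2 * (cF1 * (h * (2 * ρe))) ^ 2 + h * (2 * ρe) = h * ρh := by
      rw [hρh, hc1]
      ring
    linarith
  -- the index finset
  set K : Finset (Fin d → ℤ) := Fintype.piFinset
      (fun i => Finset.Icc ⌈z i / h - ρh⌉ ⌊z i / h + ρh⌋) with hK
  have hKmem : ∀ k : Fin d → ℤ, ‖z - node d h k‖ ≤ h * ρh → k ∈ K := by
    intro k hk
    rw [hK, Fintype.mem_piFinset]
    intro i
    have hcomp : |z i - h * (k i : ℝ)| ≤ h * ρh := by
      have hle := norm_le_pi_norm (z - node d h k) i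
      rw [Real.norm_eq_abs] at hle
      exact le_trans hle hk
    obtain ⟨hc1', hc2'⟩ := abs_le.mp hcomp
    rw [Finset.mem_Icc]
    constructor
    · rw [Int.ceil_le]
      have hnum : ((k i : ℝ) - (z i / h - ρh)) = (h * (k i : ℝ) - z i + h * ρh) / h := by
        field_simp
        ring
      have : (0:ℝ) ≤ (k i : ℝ) - (z i / h - ρh) := by
        rw [hnum]
        apply div_nonneg _ hh.le
        linarith
      linarith
    · rw [Int.le_floor]
      have hnum : ((z i / h + ρh) - (k i : ℝ)) = (z i - h * (k i : ℝ) + h * ρh) / h := by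
        field_simp
        ring
      have : (0:ℝ) ≤ (z i / h + ρh) - (k i : ℝ) := by
        rw [hnum]
        apply div_nonneg _ hh.le
        linarith
      linarith
  have hKcard : (K.card : ℝ) ≤ (2 * ρh + 1) ^ d := by
    rw [hK, Fintype.card_piFinset]
    push_cast
    calc (∏ i : Fin d, ((Finset.Icc ⌈z i / h - ρh⌉ ⌊z i / h + ρh⌋).card : ℝ))
        ≤ ∏ _i : Fin d, (2 * ρh + 1) := by
          refine Finset.prod_le_prod (fun _ _ => Nat.cast_nonneg _) (fun i _ => ?_)
          rw [Int.card_Icc]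
          rcases le_or_gt (⌊z i / h + ρh⌋ + 1 - ⌈z i / h - ρh⌉) 0 with hle | hlt
          · rw [Int.toNat_of_nonpos hle]
            push_cast
            positivity
          · have hcast : (((⌊z i / h + ρh⌋ + 1 - ⌈z i / h - ρh⌉).toNat : ℕ) : ℝ)
                = ((⌊z i / h + ρh⌋ : ℝ) + 1 - (⌈z i / h - ρh⌉ : ℝ)) := by
              rw [← Int.cast_natCast, Int.toNat_of_nonneg hlt.le]
              push_cast
              ring
            rw [hcast]
            have hf1 := Int.floor_le (z i / h + ρh)
            have hf2 := Int.le_ceil (z i / h - ρh)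
            linarith
      _ = (2 * ρh + 1) ^ d := by
          rw [Finset.prod_const, Finset.card_univ, Fintype.card_fin]
  -- the two tsums are finite sums over K
  set t1 : (Fin d → ℤ) → ℝ := fun k => w k *
      (St d h ρ0 φ F k).indicator
        (fun y => part d h φ k (taylorP d r (F.symm) (F (node d h k)) y)) x with ht1
  set t2 : (Fin d → ℤ) → ℝ := fun k => w k * part d h φ k (F.symm x) with ht2
  have hρ0ρh : ρ0 ≤ ρh := by
    rw [hρh]
    have := mul_nonneg hh.le hc10
    linarith [hρeρ0]
  have ht1sum : ∑' k : Fin d → ℤ, t1 k = ∑ k ∈ K, t1 k := by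
    refine tsum_eq_sum (fun k hk => ?_)
    by_contra hne
    have hxSt : x ∈ St d h ρ0 φ F k := by
      by_contra hnot
      refine hne ?_
      rw [ht1]
      simp only [Set.indicator_of_notMem hnot, mul_zero]
    exact hk (hKmem k (hSt2 k hxSt))
  have ht2sum : ∑' k : Fin d → ℤ, t2 k = ∑ k ∈ K, t2 k := by
    refine tsum_eq_sum (fun k hk => ?_)
    by_contra hne
    have hp : part d h φ k (F.symm x) ≠ 0 := by
      intro h0
      refine hne ?_
      rw [ht2]
      simp only [h0, mul_zero]
    have hzn : ‖z - node d h k‖ ≤ h * ρh := by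
      rw [hz]
      exact le_trans (hsupp k _ hp) (mul_le_mul_of_nonneg_left hρ0ρh hh.le)
    exact hk (hKmem k hzn)
  -- pointwise bound
  set bnd : ℝ := cw * h ^ d * S *
      ((Lφ : ℝ) * ((h ^ d)⁻¹ * h⁻¹) * (cBr * (cF1 * (h * (2 * ρe))) ^ (r + 1))) with hbnd
  have hbnd0 : 0 ≤ bnd := by positivity
  have hplip : ∀ (k : Fin d → ℤ) (z1 z2 : Fin d → ℝ),
      |part d h φ k z1 - part d h φ k z2|
        ≤ (Lφ : ℝ) * ((h ^ d)⁻¹ * h⁻¹) * ‖z1 - z2‖ := by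
    intro k z1 z2
    simp only [part]
    rw [← mul_sub, abs_mul, abs_inv, abs_pow, abs_of_pos hh]
    have hdist : |φ (fun i => z1 i / h - (k i : ℝ)) - φ (fun i => z2 i / h - (k i : ℝ))|
        ≤ (Lφ : ℝ) * ‖(fun i => z1 i / h - (k i : ℝ) : Fin d → ℝ)
            - (fun i => z2 i / h - (k i : ℝ) : Fin d → ℝ)‖ := by
      have hL := hφL.dist_le_mul (fun i => z1 i / h - (k i : ℝ))
        (fun i => z2 i / h - (k i : ℝ))
      rwa [Real.dist_eq, dist_eq_norm] at hL
    have hveq : (fun i => z1 i / h - (k i : ℝ) : Fin d → ℝ)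
        - (fun i => z2 i / h - (k i : ℝ) : Fin d → ℝ) = h⁻¹ • (z1 - z2) := by
      funext i
      show z1 i / h - (k i : ℝ) - (z2 i / h - (k i : ℝ)) = h⁻¹ * (z1 i - z2 i)
      field_simp
      ring
    rw [hveq, norm_smul, Real.norm_eq_abs, abs_inv, abs_of_pos hh] at hdist
    calc (h ^ d)⁻¹ * |φ (fun i => z1 i / h - (k i : ℝ)) - φ (fun i => z2 i / h - (k i : ℝ))|
        ≤ (h ^ d)⁻¹ * ((Lφ : ℝ) * (h⁻¹ * ‖z1 - z2‖)) := by
          refine mul_le_mul_of_nonneg_left hdist ?_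
          positivity
      _ = (Lφ : ℝ) * ((h ^ d)⁻¹ * h⁻¹) * ‖z1 - z2‖ := by ring
  have hterm : ∀ k : Fin d → ℤ, |t1 k - t2 k| ≤ bnd := by
    intro k
    rcases em (x ∈ St d h ρ0 φ F k) with hx | hx
    · have hA : ‖taylorP d r (F.symm) (F (node d h k)) x - F.symm x‖
          ≤ cBr * (cF1 * (h * (2 * ρe))) ^ (r + 1) := by
        have hv : F (node d h k) + (x - F (node d h k)) = x := by abel
        have htay := hBtay (F (node d h k)) (x - F (node d h k))
        rw [hv] at htay
        have htp : taylorP d r (F.symm) (F (node d h k)) x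
            = ∑ j ∈ Finset.range (r + 1), ((j.factorial : ℝ))⁻¹ •
              iteratedFDeriv ℝ j (F.symm : (Fin d → ℝ) → (Fin d → ℝ)) (F (node d h k))
                (fun _ => x - F (node d h k)) := rfl
        rw [norm_sub_rev, htp]
        refine le_trans htay ?_
        refine mul_le_mul_of_nonneg_left ?_ hcBr0
        exact pow_le_pow_left₀ (norm_nonneg _) (hSt1 k hx) (r + 1)
      have hlip := hplip k (taylorP d r (F.symm) (F (node d h k)) x) (F.symm x)
      have ht1k : t1 k = w k * part d h φ k (taylorP d r (F.symm) (F (node d h k)) x) := by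
        rw [ht1]
        simp only [Set.indicator_of_mem hx]
      have hdiff : |t1 k - t2 k|
          = |w k| * |part d h φ k (taylorP d r (F.symm) (F (node d h k)) x)
              - part d h φ k (F.symm x)| := by
        rw [ht1k, ht2, ← mul_sub, abs_mul]
      rw [hdiff, hbnd]
      have hb2 : |part d h φ k (taylorP d r (F.symm) (F (node d h k)) x)
          - part d h φ k (F.symm x)|
          ≤ (Lφ : ℝ) * ((h ^ d)⁻¹ * h⁻¹) * (cBr * (cF1 * (h * (2 * ρe))) ^ (r + 1)) := by
        refine le_trans hlip ?_
        refine mul_le_mul_of_nonneg_left hA ?_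
        positivity
      refine mul_le_mul (hw k) hb2 (abs_nonneg _) ?_
      positivity
    · have h0 : part d h φ k (F.symm x) = 0 := by
        by_contra hp
        exact hx (hFSt k hp)
      have ht1k : t1 k = 0 := by
        rw [ht1]
        simp only [Set.indicator_of_notMem hx, mul_zero]
      have ht2k : t2 k = 0 := by
        rw [ht2]
        simp only [h0, mul_zero]
      rw [ht1k, ht2k, sub_zero, abs_zero]
      exact hbnd0
  -- final assembly
  rw [ht1sum, ht2sum]
  calc |∑ k ∈ K, t1 k - ∑ k ∈ K, t2 k| = |∑ k ∈ K, (t1 k - t2 k)| := by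
        rw [Finset.sum_sub_distrib]
    _ ≤ ∑ k ∈ K, |t1 k - t2 k| := Finset.abs_sum_le_sum_abs _ _
    _ ≤ ∑ _k ∈ K, bnd := Finset.sum_le_sum (fun k _ => hterm k)
    _ = (K.card : ℝ) * bnd := by rw [Finset.sum_const, nsmul_eq_mul]
    _ ≤ (2 * ρh + 1) ^ d * bnd := by
        exact mul_le_mul_of_nonneg_right hKcard hbnd0
    _ ≤ ((4*ρ0+10)^d * cw * ((Lφ:ℝ)+1) * 2^(r+1)) * h ^ r * ((ρe * cF1) ^ (r + 1) * cBr)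
          * (1 + h * ((ρe * cF1) ^ 2 * cB2)) ^ d * S := by
        have hρec1 : ρe ≤ ρ0 + h / 2 * c1 := by
          have hsq : ρ0 ^ 2 ≤ ρe ^ 2 := pow_le_pow_left₀ hρ0.le hρeρ0 2
          have hmono : ρ0 ^ 2 * (cF1 ^ 2 * cB2) ≤ ρe ^ 2 * (cF1 ^ 2 * cB2) :=
            mul_le_mul_of_nonneg_right hsq (by positivity)
          have hexp : ρe = ρ0 + h / 2 * (ρ0 ^ 2 * (cF1 ^ 2 * cB2)) := by rw [hρe]; ring
          have hexp2 : ρ0 + h / 2 * c1 = ρ0 + h / 2 * (ρe ^ 2 * (cF1 ^ 2 * cB2)) := by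
            rw [hc1]; ring
          rw [hexp, hexp2]
          have := mul_le_mul_of_nonneg_left hmono (by positivity : (0:ℝ) ≤ h / 2)
          linarith
        have hAB : 2 * ρh + 1 ≤ (4 * ρ0 + 10) * (1 + h * c1) := by
          rw [hρh]
          have h1 : 0 ≤ h * c1 := mul_nonneg hh.le hc10
          have h2 : 0 ≤ ρ0 * (h * c1) := mul_nonneg hρ0.le h1
          nlinarith [hρec1]
        have hP : (2 * ρh + 1) ^ d ≤ ((4 * ρ0 + 10) * (1 + h * c1)) ^ d :=
          pow_le_pow_left₀ (by positivity) hAB d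
        have hbnd_eq : bnd = (cw * (Lφ : ℝ) * 2 ^ (r + 1)) * (h ^ r * cr * S) := by
          have hbase : cF1 * (h * (2 * ρe)) = 2 * (h * (ρe * cF1)) := by ring
          have hfac : (cF1 * (h * (2 * ρe))) ^ (r + 1)
              = 2 ^ (r + 1) * (h ^ r * h * (ρe * cF1) ^ (r + 1)) := by
            rw [hbase, mul_pow, mul_pow, pow_succ h r]
          rw [hbnd, hcr, hfac]
          have hhd : (h : ℝ) ^ d ≠ 0 := pow_ne_zero d hh0
          field_simp
        have hc1' : c1 = (ρe * cF1) ^ 2 * cB2 := hc1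
        have hcr' : cr = (ρe * cF1) ^ (r + 1) * cBr := hcr
        rw [← hc1', ← hcr']
        calc (2 * ρh + 1) ^ d * bnd
            ≤ ((4 * ρ0 + 10) * (1 + h * c1)) ^ d
              * ((cw * (Lφ : ℝ) * 2 ^ (r + 1)) * (h ^ r * cr * S)) := by
              rw [hbnd_eq]
              refine mul_le_mul_of_nonneg_right hP ?_
              rw [← hbnd_eq]
              exact hbnd0
          _ = ((4 * ρ0 + 10) ^ d * (1 + h * c1) ^ d * cw * 2 ^ (r + 1) * h ^ r * cr * S)
                * (Lφ : ℝ) := by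
              rw [mul_pow]
              ring
          _ ≤ ((4 * ρ0 + 10) ^ d * (1 + h * c1) ^ d * cw * 2 ^ (r + 1) * h ^ r * cr * S)
                * ((Lφ : ℝ) + 1) := by
              refine mul_le_mul_of_nonneg_left (by linarith [Lφ.coe_nonneg]) ?_
              positivity
          _ = ((4 * ρ0 + 10) ^ d * cw * ((Lφ : ℝ) + 1) * 2 ^ (r + 1)) * h ^ r * cr
                * (1 + h * c1) ^ d * S := by ring
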